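/- For the KNN valuation function u with parameter k and distinct i,j,q, the difference φ_{ij}(u) - φ_{iq}(u) equals (2/n)·Σ_{s=k-1}^{n-3} [1/C(n-1,s) + 1/C(n-1,s+1)]·Σ_{S⊆N∖{i,j,q}, |S|=s} [u(S∪{i,j}) - u(S∪{i,q}) - u(S∪{j}) + u(S∪{q})], i.e., terms with |S| ≤ k-2 vanish. -/

import Mathlib

open Finset

/-- KNN valuation function: fraction (out of k) of label matches among the
min(k,|S|) smallest-index (closest) elements of S. `m i` says whether train
point i's label matches the test label. -/
noncomputable def knnVal (k : ℕ) (m : ℕ → Bool) (S : Finset ℕ) : ℝ :=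
  (((S.sort (· ≤ ·)).take k).countP m : ℝ) / k

/-- Discrete second difference of a set function. -/
noncomputable def secondDiff (u : Finset ℕ → ℝ) (S : Finset ℕ) (i j : ℕ) : ℝ :=
  u (S ∪ {i, j}) - u (S ∪ {i}) - u (S ∪ {j}) + u S

/-- Shapley–Taylor pair-interaction index on N = {1,…,n}. -/
noncomputable def sti (n : ℕ) (u : Finset ℕ → ℝ) (i j : ℕ) : ℝ :=
  (2 / n) * ∑ S ∈ ((Finset.Icc 1 n) \ {i, j}).powerset,
    (1 / ((n - 1).choose S.card) : ℝ) * secondDiff u S i j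

lemma knnVal_eq_sum (k : ℕ) (m : ℕ → Bool) (S : Finset ℕ) (h : S.card ≤ k) :
    knnVal k m S = (∑ x ∈ S, (if m x then (1:ℝ) else 0)) / k := by
  unfold knnVal
  have hl : (S.sort (· ≤ ·)).length = S.card := Finset.length_sort _
  rw [List.take_of_length_le (by omega)]
  congr 1
  rw [Finset.sum_boole]
  norm_cast
  have h1 : List.countP m (S.sort (· ≤ ·)) = Multiset.countP (fun x => m x = true) S.val := by
    rw [← Finset.sort_eq S (· ≤ ·), Multiset.coe_countP]
    congr 1
    ext b
    simp
  rw [h1, Multiset.countP_eq_card_filter]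
  rfl

lemma knnVal_cancel (k : ℕ) (m : ℕ → Bool) (i j q : ℕ) (S : Finset ℕ)
    (hij : i ≠ j) (hiq : i ≠ q)
    (hi : i ∉ S) (hj : j ∉ S) (hq : q ∉ S) (hcard : S.card + 2 ≤ k) :
    knnVal k m (S ∪ {i, j}) - knnVal k m (S ∪ {i, q})
      - knnVal k m (S ∪ {j}) + knnVal k m (S ∪ {q}) = 0 := by
  have dij : Disjoint S ({i, j} : Finset ℕ) := by
    simp [Finset.disjoint_insert_right, hi, hj]
  have diq : Disjoint S ({i, q} : Finset ℕ) := by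
    simp [Finset.disjoint_insert_right, hi, hq]
  have dj : Disjoint S ({j} : Finset ℕ) := by simp [hj]
  have dq : Disjoint S ({q} : Finset ℕ) := by simp [hq]
  rw [knnVal_eq_sum k m _ (by rw [Finset.card_union_of_disjoint dij, Finset.card_pair hij]; omega),
      knnVal_eq_sum k m _ (by rw [Finset.card_union_of_disjoint diq, Finset.card_pair hiq]; omega),
      knnVal_eq_sum k m _ (by rw [Finset.card_union_of_disjoint dj, Finset.card_singleton]; omega),
      knnVal_eq_sum k m _ (by rw [Finset.card_union_of_disjoint dq, Finset.card_singleton]; omega)]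
  rw [Finset.sum_union dij, Finset.sum_union diq, Finset.sum_union dj, Finset.sum_union dq,
      Finset.sum_pair hij, Finset.sum_pair hiq, Finset.sum_singleton, Finset.sum_singleton]
  ring

theorem sti_knn_diff_restricted (n k : ℕ) (m : ℕ → Bool) (i j q : ℕ)
    (hk : 1 ≤ k) (hkn : k ≤ n)
    (hi : i ∈ Finset.Icc 1 n) (hj : j ∈ Finset.Icc 1 n) (hq : q ∈ Finset.Icc 1 n)
    (hij : i ≠ j) (hiq : i ≠ q) (hjq : j ≠ q) :
    sti n (knnVal k m) i j - sti n (knnVal k m) i q =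
      (2 / n) * ∑ s ∈ Finset.Icc (k - 1) (n - 3),
        ((1 / ((n - 1).choose s) : ℝ) + 1 / ((n - 1).choose (s + 1))) *
          ∑ S ∈ ((Finset.Icc 1 n) \ {i, j, q}).powersetCard s,
            (knnVal k m (S ∪ {i, j}) - knnVal k m (S ∪ {i, q})
              - knnVal k m (S ∪ {j}) + knnVal k m (S ∪ {q})) := by
  classical
  set u := knnVal k m with hu
  set A := Finset.Icc 1 n with hA
  set B := A \ {i, j, q} with hB
  have hqB : q ∉ B := by simp [hB]
  have hjB : j ∉ B := by simp [hB]
  have h1 : A \ {i, j} = insert q B := by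
    ext x
    simp only [hB, Finset.mem_sdiff, Finset.mem_insert, Finset.mem_singleton]
    constructor
    · rintro ⟨hx, h2⟩
      by_cases hxq : x = q
      · exact Or.inl hxq
      · exact Or.inr ⟨hx, by tauto⟩
    · rintro (rfl | ⟨hx, h2⟩)
      · exact ⟨hq, by tauto⟩
      · exact ⟨hx, by tauto⟩
  have h2 : A \ {i, q} = insert j B := by
    ext x
    simp only [hB, Finset.mem_sdiff, Finset.mem_insert, Finset.mem_singleton]
    constructor
    · rintro ⟨hx, h2⟩
      by_cases hxj : x = j
      · exact Or.inl hxj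
      · exact Or.inr ⟨hx, by tauto⟩
    · rintro (rfl | ⟨hx, h2⟩)
      · exact ⟨hj, by tauto⟩
      · exact ⟨hx, by tauto⟩
  have hBcard : B.card = n - 3 := by
    rw [hB, Finset.card_sdiff_of_subset]
    · rw [hA, Nat.card_Icc]
      have : ({i, j, q} : Finset ℕ).card = 3 := by
        rw [Finset.card_insert_of_notMem (by simp [hij, hiq]),
            Finset.card_insert_of_notMem (by simp [hjq]), Finset.card_singleton]
      omega
    · intro x hx
      simp only [Finset.mem_insert, Finset.mem_singleton] at hx
      rcases hx with rfl | rfl | rfl <;> assumption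
  rw [sti, sti, ← mul_sub]
  congr 1
  rw [h1, h2, Finset.sum_powerset_insert hqB, Finset.sum_powerset_insert hjB]
  have key : ∀ T ∈ B.powerset,
      (1 / ((n - 1).choose T.card) : ℝ) * secondDiff u T i j
        + (1 / ((n - 1).choose (insert q T).card) : ℝ) * secondDiff u (insert q T) i j
        - ((1 / ((n - 1).choose T.card) : ℝ) * secondDiff u T i q
          + (1 / ((n - 1).choose (insert j T).card) : ℝ) * secondDiff u (insert j T) i q)
      = ((1 / ((n - 1).choose T.card) : ℝ) + 1 / ((n - 1).choose (T.card + 1))) *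
          (u (T ∪ {i, j}) - u (T ∪ {i, q}) - u (T ∪ {j}) + u (T ∪ {q})) := by
    intro T hT
    rw [Finset.mem_powerset] at hT
    have hqT : q ∉ T := fun h => hqB (hT h)
    have hjT : j ∉ T := fun h => hjB (hT h)
    rw [Finset.card_insert_of_notMem hqT, Finset.card_insert_of_notMem hjT]
    have e1 : insert q T ∪ {i, j} = insert j T ∪ {i, q} := by
      ext x; simp only [Finset.mem_union, Finset.mem_insert, Finset.mem_singleton]; tauto
    have e2 : insert q T ∪ {j} = insert j T ∪ {q} := by
      ext x; simp only [Finset.mem_union, Finset.mem_insert, Finset.mem_singleton]; tauto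
    have e3 : insert q T ∪ {i} = T ∪ {i, q} := by
      ext x; simp only [Finset.mem_union, Finset.mem_insert, Finset.mem_singleton]; tauto
    have e4 : (insert q T : Finset ℕ) = T ∪ {q} := by
      ext x; simp only [Finset.mem_union, Finset.mem_insert, Finset.mem_singleton]; tauto
    have e5 : insert j T ∪ {i} = T ∪ {i, j} := by
      ext x; simp only [Finset.mem_union, Finset.mem_insert, Finset.mem_singleton]; tauto
    have e6 : (insert j T : Finset ℕ) = T ∪ {j} := by
      ext x; simp only [Finset.mem_union, Finset.mem_insert, Finset.mem_singleton]; tauto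
    simp only [secondDiff]
    rw [e1, e2, e3, e5]
    rw [show u (insert q T) = u (T ∪ {q}) from by rw [e4],
        show u (insert j T) = u (T ∪ {j}) from by rw [e6]]
    ring
  rw [← Finset.sum_add_distrib, ← Finset.sum_add_distrib, ← Finset.sum_sub_distrib]
  rw [Finset.sum_congr rfl key]
  rw [Finset.sum_powerset]
  rw [hBcard]
  have inner : ∀ x : ℕ, ∑ T ∈ B.powersetCard x,
      ((1 / ((n - 1).choose T.card) : ℝ) + 1 / ((n - 1).choose (T.card + 1))) *
        (u (T ∪ {i, j}) - u (T ∪ {i, q}) - u (T ∪ {j}) + u (T ∪ {q}))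
      = ((1 / ((n - 1).choose x) : ℝ) + 1 / ((n - 1).choose (x + 1))) *
        ∑ T ∈ B.powersetCard x,
          (u (T ∪ {i, j}) - u (T ∪ {i, q}) - u (T ∪ {j}) + u (T ∪ {q})) := by
    intro x
    rw [Finset.mul_sum]
    apply Finset.sum_congr rfl
    intro T hT
    rw [(Finset.mem_powersetCard.mp hT).2]
  simp only [inner]
  refine (Finset.sum_subset ?_ ?_).symm
  · intro x hx
    rw [Finset.mem_Icc] at hx
    rw [Finset.mem_range]
    omega
  · intro x hx hnx
    rw [Finset.mem_range] at hx
    rw [Finset.mem_Icc] at hnx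
    have hxk : x < k - 1 := by omega
    have : ∑ S ∈ B.powersetCard x,
        (u (S ∪ {i, j}) - u (S ∪ {i, q}) - u (S ∪ {j}) + u (S ∪ {q})) = 0 := by
      apply Finset.sum_eq_zero
      intro S hS
      rw [Finset.mem_powersetCard] at hS
      obtain ⟨hSB, hScard⟩ := hS
      have hiS : i ∉ S := fun h => by
        have := hSB h; rw [hB] at this; simp at this
      have hjS : j ∉ S := fun h => hjB (hSB h)
      have hqS : q ∉ S := fun h => hqB (hSB h)
      exact knnVal_cancel k m i j q S hij hiq hiS hjS hqS (by omega)
    rw [this, mul_zero]
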